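/- Let G₁ and G₂ be groups, let π₁ and π₂ denote the projection homomorphisms from G₁ × G₂ to its factors, and let L be a finite subgroup of G₁ × G₂. Then the normalizer N_{G₁×G₂}(L) is contained in N_{G₁}(π₁(L)) × N_{G₂}(π₂(L)) and has finite index in it. -/

import Mathlib

/-- Conjugation images of a subgroup agree iff the elements differ by a
normalizer element. -/
lemma conj_image_eq_iff {G : Type*} [Group G] (L : Subgroup G) (a b : G) :
    ((fun x => a * x * a⁻¹) '' (L : Set G) = (fun x => b * x * b⁻¹) '' (L : Set G)) ↔
      a⁻¹ * b ∈ Subgroup.normalizer (L : Set G) := by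
  constructor
  · intro h
    rw [Subgroup.mem_normalizer_iff]
    intro g
    constructor
    · intro hg
      have hmem : b * g * b⁻¹ ∈ (fun x => a * x * a⁻¹) '' (L : Set G) := by
        rw [h]; exact ⟨g, hg, rfl⟩
      obtain ⟨x, hx, hxy⟩ := hmem
      have hxy' : a * x * a⁻¹ = b * g * b⁻¹ := hxy
      have hx2 : (a⁻¹ * b) * g * (a⁻¹ * b)⁻¹ = x := by
        have h3 : x = a⁻¹ * (a * x * a⁻¹) * a := by group
        rw [h3, hxy']; group
      rw [hx2]; exact hx
    · intro hg
      have hmem : a * ((a⁻¹ * b) * g * (a⁻¹ * b)⁻¹) * a⁻¹ ∈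
          (fun x => b * x * b⁻¹) '' (L : Set G) := by
        rw [← h]; exact ⟨_, hg, rfl⟩
      obtain ⟨y, hy, hxy⟩ := hmem
      have hxy' : b * y * b⁻¹ = a * ((a⁻¹ * b) * g * (a⁻¹ * b)⁻¹) * a⁻¹ := hxy
      have h2 : b * y * b⁻¹ = b * g * b⁻¹ := by rw [hxy']; group
      have h3 : y = g := mul_left_cancel (mul_right_cancel h2)
      rwa [← h3]
  · intro h
    rw [Subgroup.mem_normalizer_iff] at h
    ext z
    constructor
    · rintro ⟨x, hx, rfl⟩
      refine ⟨(a⁻¹ * b)⁻¹ * x * (a⁻¹ * b), ?_, by group⟩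
      apply (h ((a⁻¹ * b)⁻¹ * x * (a⁻¹ * b))).mpr
      have hx' : (a⁻¹ * b) * ((a⁻¹ * b)⁻¹ * x * (a⁻¹ * b)) * (a⁻¹ * b)⁻¹ = x := by group
      rw [hx']; exact hx
    · rintro ⟨x, hx, rfl⟩
      exact ⟨(a⁻¹ * b) * x * (a⁻¹ * b)⁻¹, (h x).mp hx, by group⟩

/-- If `L` is a finite subgroup of a direct product
`G₁ × G₂`, then the normalizer `N_{G₁×G₂}(L)` is contained in
`N_{G₁}(π₁(L)) × N_{G₂}(π₂(L))` and has finite index in it. -/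
theorem normalizer_finite_index_in_product_of_normalizers
    {G₁ G₂ : Type*} [Group G₁] [Group G₂] (L : Subgroup (G₁ × G₂))
    (hL : Finite L) :
    Subgroup.normalizer (L : Set (G₁ × G₂)) ≤
      ((Subgroup.normalizer ((L.map (MonoidHom.fst G₁ G₂) : Subgroup G₁) : Set G₁)).prod
        (Subgroup.normalizer ((L.map (MonoidHom.snd G₁ G₂) : Subgroup G₂) : Set G₂))) ∧
    (Subgroup.normalizer (L : Set (G₁ × G₂))).relIndex
      ((Subgroup.normalizer ((L.map (MonoidHom.fst G₁ G₂) : Subgroup G₁) : Set G₁)).prod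
        (Subgroup.normalizer ((L.map (MonoidHom.snd G₁ G₂) : Subgroup G₂) : Set G₂))) ≠ 0 := by
  set N := Subgroup.normalizer (L : Set (G₁ × G₂)) with hN
  set P := ((Subgroup.normalizer ((L.map (MonoidHom.fst G₁ G₂) : Subgroup G₁) : Set G₁)).prod
        (Subgroup.normalizer ((L.map (MonoidHom.snd G₁ G₂) : Subgroup G₂) : Set G₂))) with hP
  have h1 : N ≤ P := by
    intro g hg
    exact ⟨Subgroup.le_normalizer_map (MonoidHom.fst G₁ G₂) ⟨g, hg, rfl⟩,
           Subgroup.le_normalizer_map (MonoidHom.snd G₁ G₂) ⟨g, hg, rfl⟩⟩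
  refine ⟨h1, ?_⟩
  -- the big finite subgroup M = π₁(L) × π₂(L)
  set M := (L.map (MonoidHom.fst G₁ G₂)).prod (L.map (MonoidHom.snd G₁ G₂)) with hM
  have hLfin : (L : Set (G₁ × G₂)).Finite := Set.toFinite _
  have hMfin : (M : Set (G₁ × G₂)).Finite := by
    have h1' : ((L.map (MonoidHom.fst G₁ G₂)) : Set G₁).Finite := by
      rw [Subgroup.coe_map]; exact hLfin.image _
    have h2' : ((L.map (MonoidHom.snd G₁ G₂)) : Set G₂).Finite := by
      rw [Subgroup.coe_map]; exact hLfin.image _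
    have : (M : Set (G₁ × G₂)) = ((L.map (MonoidHom.fst G₁ G₂)) : Set G₁) ×ˢ
        ((L.map (MonoidHom.snd G₁ G₂)) : Set G₂) := by
      ext x; simp [hM, Subgroup.mem_prod, Set.mem_prod]
    rw [this]
    exact h1'.prod h2'
  haveI : Finite M := hMfin
  -- conjugates of L by elements of P live inside M
  have hconjM : ∀ p : P, (fun x => (p : G₁ × G₂) * x * (p : G₁ × G₂)⁻¹) '' (L : Set (G₁ × G₂))
      ⊆ (M : Set (G₁ × G₂)) := by
    rintro ⟨⟨p₁, p₂⟩, hp₁, hp₂⟩ z ⟨x, hx, rfl⟩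
    exact ⟨((Subgroup.mem_normalizer_iff.mp hp₁) x.1).mp ⟨x, hx, rfl⟩,
           ((Subgroup.mem_normalizer_iff.mp hp₂) x.2).mp ⟨x, hx, rfl⟩⟩
  -- the map from the quotient to subsets of M
  have hwd : ∀ p r : P, @Setoid.r _ (QuotientGroup.leftRel (N.subgroupOf P)) p r →
      ((Subtype.val : M → G₁ × G₂) ⁻¹'
          ((fun x => (p : G₁ × G₂) * x * (p : G₁ × G₂)⁻¹) '' (L : Set (G₁ × G₂)))) =
      ((Subtype.val : M → G₁ × G₂) ⁻¹'
          ((fun x => (r : G₁ × G₂) * x * (r : G₁ × G₂)⁻¹) '' (L : Set (G₁ × G₂)))) := by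
    intro p r hpr
    have h0 : p⁻¹ * r ∈ N.subgroupOf P := QuotientGroup.leftRel_apply.mp hpr
    have h' : (p : G₁ × G₂)⁻¹ * (r : G₁ × G₂) ∈ N := by
      have := Subgroup.mem_subgroupOf.mp h0
      simpa using this
    rw [(conj_image_eq_iff L (p : G₁ × G₂) (r : G₁ × G₂)).mpr h']
  let f : (P ⧸ N.subgroupOf P) → Set M := fun q =>
    Quotient.liftOn' q
      (fun p => (Subtype.val : M → G₁ × G₂) ⁻¹'
          ((fun x => (p : G₁ × G₂) * x * (p : G₁ × G₂)⁻¹) '' (L : Set (G₁ × G₂)))) hwd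
  have hinj : Function.Injective f := by
    intro q₁ q₂
    induction q₁ using Quotient.inductionOn'
    induction q₂ using Quotient.inductionOn'
    rename_i p r
    intro hfeq
    have hfeq' : ((Subtype.val : M → G₁ × G₂) ⁻¹'
          ((fun x => (p : G₁ × G₂) * x * (p : G₁ × G₂)⁻¹) '' (L : Set (G₁ × G₂)))) =
        ((Subtype.val : M → G₁ × G₂) ⁻¹'
          ((fun x => (r : G₁ × G₂) * x * (r : G₁ × G₂)⁻¹) '' (L : Set (G₁ × G₂)))) := hfeq
    have himg : ((fun x => (p : G₁ × G₂) * x * (p : G₁ × G₂)⁻¹) '' (L : Set (G₁ × G₂))) =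
        ((fun x => (r : G₁ × G₂) * x * (r : G₁ × G₂)⁻¹) '' (L : Set (G₁ × G₂))) := by
      have hrange : ∀ s : P, (fun x => (s : G₁ × G₂) * x * (s : G₁ × G₂)⁻¹) ''
          (L : Set (G₁ × G₂)) ⊆ Set.range (Subtype.val : M → G₁ × G₂) := by
        intro s
        rw [Subtype.range_coe]
        exact hconjM s
      calc ((fun x => (p : G₁ × G₂) * x * (p : G₁ × G₂)⁻¹) '' (L : Set (G₁ × G₂)))
          = Subtype.val '' ((Subtype.val : M → G₁ × G₂) ⁻¹'
            ((fun x => (p : G₁ × G₂) * x * (p : G₁ × G₂)⁻¹) '' (L : Set (G₁ × G₂)))) :=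
            (Set.image_preimage_eq_iff.mpr (hrange p)).symm
        _ = Subtype.val '' ((Subtype.val : M → G₁ × G₂) ⁻¹'
            ((fun x => (r : G₁ × G₂) * x * (r : G₁ × G₂)⁻¹) '' (L : Set (G₁ × G₂)))) := by
            rw [hfeq']
        _ = ((fun x => (r : G₁ × G₂) * x * (r : G₁ × G₂)⁻¹) '' (L : Set (G₁ × G₂))) :=
            Set.image_preimage_eq_iff.mpr (hrange r)
    have hmem : (p : G₁ × G₂)⁻¹ * (r : G₁ × G₂) ∈ N :=
      (conj_image_eq_iff L (p : G₁ × G₂) (r : G₁ × G₂)).mp himg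
    apply Quotient.sound'
    apply QuotientGroup.leftRel_apply.mpr
    apply Subgroup.mem_subgroupOf.mpr
    simpa using hmem
  haveI : Finite (P ⧸ N.subgroupOf P) := Finite.of_injective f hinj
  exact Subgroup.index_ne_zero_of_finite
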